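/- arXiv:1712.02823 — 2 statements merged into one kernel-verified Lean document; each statement's English description precedes it below -/
import Mathlib

section
/- In the Whitney cone setup described in the context, diam(T_S) ≤ C diam(S), where C depends only on θ and A. -/
open Set Metric MeasureTheory ENNReal Filter Topology

noncomputable abbrev GraphSpace (d m : ℕ) :=
  WithLp 2 (EuclideanSpace ℝ (Fin d) × EuclideanSpace ℝ (Fin m))

/-- Orthogonal projection `Π : ℝⁿ = ℝᵈ × ℝ^{n-d} → ℝᵈ` onto the first factor. -/
noncomputable def proj1 {d m : ℕ} (y : GraphSpace d m) : EuclideanSpace ℝ (Fin d) :=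
  (WithLp.equiv 2 (EuclideanSpace ℝ (Fin d) × EuclideanSpace ℝ (Fin m)) y).1

/-- The subspace `V⊥ = {0} × ℝ^{n-d}`. -/
def VperpSet (d m : ℕ) : Set (GraphSpace d m) := {z | proj1 z = 0}

/-- `y ∈ X(x, V⊥, θ)`, i.e. `dist(y - x, V⊥) < cos θ · |y - x|`. -/
noncomputable def InPerpCone (θ : ℝ) {d m : ℕ} (x y : GraphSpace d m) : Prop :=
  infDist (y - x) (VperpSet d m) < Real.cos θ * dist y x

/-- The graph map `F(t) = (t, f(t))`. -/
noncomputable def graphMap {d m : ℕ} (f : EuclideanSpace ℝ (Fin d) → EuclideanSpace ℝ (Fin m))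
    (t : EuclideanSpace ℝ (Fin d)) : GraphSpace d m :=
  (WithLp.equiv 2 (EuclideanSpace ℝ (Fin d) × EuclideanSpace ℝ (Fin m))).symm (t, f t)

/-- The bad part `B(K)` of `E` inside the ball `B'`. -/
def badPart (θ r : ℝ) {d m : ℕ} (E K B' : Set (GraphSpace d m)) : Set (GraphSpace d m) :=
  {y | y ∈ E ∩ B' ∧ ∀ x ∈ K, ¬ (y ∈ ball x r ∧ InPerpCone θ x y)}

/-- The Whitney piece `T_S = (S × ℝ^{n-d}) ∩ B(K)`. -/
def whitneyPiece {d m : ℕ} (S : Set (EuclideanSpace ℝ (Fin d)))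
    (BK : Set (GraphSpace d m)) : Set (GraphSpace d m) :=
  {y ∈ BK | proj1 y ∈ S}

/-- Distance between two sets. -/
noncomputable def setEDist {α : Type*} [PseudoEMetricSpace α] (s t : Set α) : ℝ≥0∞ :=
  ⨅ y ∈ s, EMetric.infEdist y t

/-- An axis-parallel cube in `ℝᵈ`. -/
def IsCube {d : ℕ} (S : Set (EuclideanSpace ℝ (Fin d))) : Prop :=
  ∃ (c : EuclideanSpace ℝ (Fin d)) (l : ℝ), 0 < l ∧
    S = {t | ∀ i, c i ≤ t i ∧ t i ≤ c i + l}

lemma real_le_of_forall_pos_le_add' {a b : ℝ} (h : ∀ ε > 0, a ≤ b + ε) : a ≤ b := by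
  by_contra hc
  push_neg at hc
  have := h ((a - b) / 2) (by linarith)
  linarith

lemma aux_infDist_le {d m : ℕ} (z : GraphSpace d m) :
    Metric.infDist z (VperpSet d m) ≤ ‖proj1 z‖ := by
  set w : GraphSpace d m :=
    (WithLp.equiv 2 (EuclideanSpace ℝ (Fin d) × EuclideanSpace ℝ (Fin m))).symm
      (0, (WithLp.equiv 2 (EuclideanSpace ℝ (Fin d) × EuclideanSpace ℝ (Fin m)) z).2) with hw
  have hmem : w ∈ VperpSet d m := by
    simp [VperpSet, proj1, hw]
  have hdist : dist z w = ‖proj1 z‖ := by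
    rw [WithLp.prod_dist_eq_of_L2]
    have h1 : w.fst = 0 := rfl
    have h2 : w.snd = z.snd := rfl
    rw [h1, h2, dist_self, dist_zero_right]
    simp [Real.sqrt_sq (norm_nonneg _)]
    rfl
  calc Metric.infDist z (VperpSet d m) ≤ dist z w := Metric.infDist_le_dist_of_mem hmem
    _ = ‖proj1 z‖ := hdist

lemma aux_proj1_sub {d m : ℕ} (y x : GraphSpace d m) :
    proj1 (y - x) = proj1 y - proj1 x := by
  simp [proj1, WithLp.ofLp_sub]

theorem stmt14 (θ : ℝ) (hθ : θ ∈ Ioo 0 (Real.pi / 2)) (A : ℝ) (hA : 1 ≤ A) :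
    ∃ C : ℝ, 0 < C ∧
    ∀ (d m : ℕ), 0 < d → 0 < m →
    ∀ (r : ℝ), 0 < r →
    ∀ (E K : Set (GraphSpace d m)), IsCompact K → K ⊆ E →
      EMetric.diam K < ENNReal.ofReal r →
      (∀ x ∈ K, ∀ y ∈ E, y ∈ ball x r → ¬ InPerpCone θ x y) →
    ∀ (f : EuclideanSpace ℝ (Fin d) → EuclideanSpace ℝ (Fin m)),
      LipschitzWith (Real.toNNReal (1 / Real.cos θ)) f →
      (∀ x ∈ K, graphMap f (proj1 x) = x) →
    ∀ (x' : GraphSpace d m) (ρ : ℝ), K ⊆ ball x' ρ →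
      (∀ x ∈ K, ball x' ρ ⊆ ball x r) →
    ∀ (S : Set (EuclideanSpace ℝ (Fin d))), IsCube S →
      Disjoint S (proj1 '' K) →
      setEDist S (proj1 '' K) ≤ ENNReal.ofReal A * EMetric.diam S →
      EMetric.diam S ≤ ENNReal.ofReal A * setEDist S (proj1 '' K) →
      EMetric.diam (whitneyPiece S (badPart θ r E K (ball x' ρ))) ≤
        ENNReal.ofReal C * EMetric.diam S := by
  obtain ⟨hθ0, hθ2⟩ := hθ
  have hcos : 0 < Real.cos θ :=
    Real.cos_pos_of_mem_Ioo ⟨by linarith [Real.pi_pos], hθ2⟩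
  refine ⟨2 * (1 + A) / Real.cos θ, by positivity, ?_⟩
  intro d m hd hm r hr E K hK hKE hdiamK hcone f hf hgraph x' ρ hKball hballr S hS hdisj hd1 hd2
  set T := whitneyPiece S (badPart θ r E K (ball x' ρ)) with hT
  by_cases hD : EMetric.diam S = ⊤
  · rw [hD, ENNReal.mul_top (by simp [ENNReal.ofReal_eq_zero]; positivity)]
    exact le_top
  have hSbdd : Bornology.IsBounded S := Metric.isBounded_iff_ediam_ne_top.2 hD
  set dS := Metric.diam S with hdS
  have hDeq : EMetric.diam S = ENNReal.ofReal dS := (ENNReal.ofReal_toReal hD).symm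
  have hdSnn : 0 ≤ dS := Metric.diam_nonneg
  -- cone estimate
  have key : ∀ x ∈ K, ∀ y ∈ T, dist y x ≤ (1 / Real.cos θ) * dist (proj1 y) (proj1 x) := by
    intro x hx y hy
    obtain ⟨⟨⟨hyE, hyB⟩, hbad⟩, hyS⟩ := hy
    have hyr : y ∈ ball x r := hballr x hx hyB
    have hnc : ¬ InPerpCone θ x y := fun h => hbad x hx ⟨hyr, h⟩
    rw [InPerpCone, not_lt] at hnc
    have h1 : Metric.infDist (y - x) (VperpSet d m) ≤ ‖proj1 (y - x)‖ := aux_infDist_le _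
    have h2 : ‖proj1 (y - x)‖ = dist (proj1 y) (proj1 x) := by
      rw [aux_proj1_sub, ← dist_eq_norm]
    have h3 : Real.cos θ * dist y x ≤ dist (proj1 y) (proj1 x) := by
      calc Real.cos θ * dist y x ≤ Metric.infDist (y - x) (VperpSet d m) := hnc
        _ ≤ ‖proj1 (y - x)‖ := h1
        _ = dist (proj1 y) (proj1 x) := h2
    rw [one_div, inv_mul_eq_div, le_div_iff₀ hcos]
    linarith
  apply EMetric.diam_le
  intro y1 hy1 y2 hy2
  rw [edist_dist, hDeq, ← ENNReal.ofReal_mul (by positivity)]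
  apply ENNReal.ofReal_le_ofReal
  -- real goal
  apply real_le_of_forall_pos_le_add'
  intro ε hε
  set δ : ℝ := ε * Real.cos θ / 2 with hδdef
  have hδ : 0 < δ := by positivity
  -- extract a nearby point of proj1 '' K
  have hfin : ENNReal.ofReal A * EMetric.diam S ≠ ⊤ :=
    ENNReal.mul_ne_top ENNReal.ofReal_ne_top hD
  have hlt : setEDist S (proj1 '' K) < ENNReal.ofReal A * EMetric.diam S + ENNReal.ofReal δ :=
    lt_of_le_of_lt hd1 (ENNReal.lt_add_right hfin (ENNReal.ofReal_pos.2 hδ).ne')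
  rw [setEDist] at hlt
  obtain ⟨s, hs⟩ := iInf_lt_iff.1 hlt
  obtain ⟨hsS, hs⟩ := iInf_lt_iff.1 hs
  obtain ⟨p, hpK, hsp⟩ := EMetric.infEdist_lt_iff.1 hs
  obtain ⟨x, hxK, rfl⟩ := hpK
  have hspR : dist s (proj1 x) ≤ A * dS + δ := by
    have h4 : edist s (proj1 x) < ENNReal.ofReal (A * dS + δ) := by
      rw [ENNReal.ofReal_add (by positivity) hδ.le, ENNReal.ofReal_mul (by linarith : (0:ℝ) ≤ A), ← hDeq]
      exact hsp
    exact (edist_lt_ofReal.1 h4).le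
  have hb1 : dist (proj1 y1) (proj1 x) ≤ dS + (A * dS + δ) :=
    (dist_triangle _ s _).trans
      (add_le_add (Metric.dist_le_diam_of_mem hSbdd hy1.2 hsS) hspR)
  have hb2 : dist (proj1 y2) (proj1 x) ≤ dS + (A * dS + δ) :=
    (dist_triangle _ s _).trans
      (add_le_add (Metric.dist_le_diam_of_mem hSbdd hy2.2 hsS) hspR)
  have e1 := key x hxK y1 hy1
  have e2 := key x hxK y2 hy2
  have hic : 0 ≤ 1 / Real.cos θ := by positivity
  have f1 : dist y1 x ≤ (1 / Real.cos θ) * (dS + (A * dS + δ)) :=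
    e1.trans (mul_le_mul_of_nonneg_left hb1 hic)
  have f2 : dist y2 x ≤ (1 / Real.cos θ) * (dS + (A * dS + δ)) :=
    e2.trans (mul_le_mul_of_nonneg_left hb2 hic)
  have hδid : (1 / Real.cos θ) * δ = ε / 2 := by
    rw [hδdef]; field_simp
  have htri : dist y1 y2 ≤ dist y1 x + dist y2 x := dist_triangle_right _ _ _
  have hexp : (1 / Real.cos θ) * (dS + (A * dS + δ)) =
      (1 / Real.cos θ) * ((1 + A) * dS) + (1 / Real.cos θ) * δ := by ring
  have hCid : 2 * ((1 / Real.cos θ) * ((1 + A) * dS)) = 2 * (1 + A) / Real.cos θ * dS := by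
    ring
  calc dist y1 y2 ≤ dist y1 x + dist y2 x := htri
    _ ≤ 2 * ((1 / Real.cos θ) * (dS + (A * dS + δ))) := by linarith
    _ = 2 * (1 + A) / Real.cos θ * dS + ε := by
        rw [hexp]; rw [mul_add]; rw [hCid]; rw [hδid]; ring
end

section
/- In the Whitney cone setup described in the context, if T_S ≠ ∅ then c · diam(S) ≤ dist(T_S, K) ≤ C · diam(S), where c and C are positive constants depending only on θ and A. -/
open Set Metric MeasureTheory ENNReal Filter Topology

section Aux

variable {d m : ℕ}

lemma proj1_sub (u v : GraphSpace d m) : proj1 (u - v) = proj1 u - proj1 v := rfl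

lemma proj1_norm_le (u : GraphSpace d m) : ‖proj1 u‖ ≤ ‖u‖ := by
  rw [WithLp.prod_norm_eq_of_L2]
  have h : proj1 u = u.fst := rfl
  rw [h]
  refine le_trans ?_ (Real.sqrt_le_sqrt (le_add_of_nonneg_right (by positivity)))
  rw [Real.sqrt_sq (norm_nonneg _)]

lemma proj1_dist_le (u v : GraphSpace d m) : dist (proj1 u) (proj1 v) ≤ dist u v := by
  rw [dist_eq_norm, dist_eq_norm, ← proj1_sub]; exact proj1_norm_le _

lemma infDist_Vperp (w : GraphSpace d m) : infDist w (VperpSet d m) = ‖proj1 w‖ := by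
  apply le_antisymm
  · have hz : ((WithLp.equiv 2 (EuclideanSpace ℝ (Fin d) × EuclideanSpace ℝ (Fin m))).symm
        ((0 : EuclideanSpace ℝ (Fin d)), w.snd)) ∈ VperpSet d m := rfl
    refine le_trans (infDist_le_dist_of_mem hz) ?_
    rw [dist_eq_norm, WithLp.prod_norm_eq_of_L2]
    have h1 : (w - (WithLp.equiv 2 (EuclideanSpace ℝ (Fin d) × EuclideanSpace ℝ (Fin m))).symm
        ((0 : EuclideanSpace ℝ (Fin d)), w.snd)).fst = proj1 w := by
      show w.fst - 0 = w.fst; simp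
    have h2 : (w - (WithLp.equiv 2 (EuclideanSpace ℝ (Fin d) × EuclideanSpace ℝ (Fin m))).symm
        ((0 : EuclideanSpace ℝ (Fin d)), w.snd)).snd = 0 := by
      show w.snd - w.snd = 0; simp
    rw [h1, h2]
    simp [Real.sqrt_sq (norm_nonneg _)]
  · have hne : (VperpSet d m).Nonempty := ⟨0, rfl⟩
    have h : ENNReal.ofReal ‖proj1 w‖ ≤ EMetric.infEdist w (VperpSet d m) := by
      refine EMetric.le_infEdist.2 fun z hz => ?_
      rw [edist_dist]
      refine ENNReal.ofReal_le_ofReal ?_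
      calc ‖proj1 w‖ = ‖proj1 (w - z)‖ := by rw [proj1_sub, hz, sub_zero]
        _ ≤ ‖w - z‖ := proj1_norm_le _
        _ = dist w z := (dist_eq_norm _ _).symm
    calc ‖proj1 w‖ = (ENNReal.ofReal ‖proj1 w‖).toReal := by
          rw [ENNReal.toReal_ofReal (norm_nonneg _)]
      _ ≤ (EMetric.infEdist w (VperpSet d m)).toReal :=
          ENNReal.toReal_mono (infEdist_ne_top hne) h
      _ = infDist w (VperpSet d m) := rfl

lemma cube_ediam_ne_top {d : ℕ} {S : Set (EuclideanSpace ℝ (Fin d))} (h : IsCube S) :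
    EMetric.diam S ≠ ⊤ := by
  obtain ⟨c, l, hl, rfl⟩ := h
  refine ((isBounded_closedBall (x := c) (r := Real.sqrt d * l)).subset ?_).ediam_ne_top
  intro t ht
  simp only [mem_closedBall]
  rw [EuclideanSpace.dist_eq]
  have hb : ∀ i : Fin d, dist (t i) (c i) ^ 2 ≤ l ^ 2 := by
    intro i
    have h1 := (ht i).1
    have h2 := (ht i).2
    rw [Real.dist_eq, sq_abs]
    nlinarith
  calc Real.sqrt (∑ i, dist (t i) (c i) ^ 2)
      ≤ Real.sqrt (∑ _i : Fin d, l ^ 2) :=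
        Real.sqrt_le_sqrt (Finset.sum_le_sum fun i _ => hb i)
    _ = Real.sqrt ((d : ℝ) * l ^ 2) := by
        rw [Finset.sum_const, Finset.card_univ, Fintype.card_fin, nsmul_eq_mul]
    _ = Real.sqrt d * l := by
        rw [Real.sqrt_mul (Nat.cast_nonneg d), Real.sqrt_sq hl.le]

end Aux

theorem stmt15 (θ : ℝ) (hθ : θ ∈ Ioo 0 (Real.pi / 2)) (A : ℝ) (hA : 1 ≤ A) :
    ∃ c C : ℝ, 0 < c ∧ 0 < C ∧
    ∀ (d m : ℕ), 0 < d → 0 < m →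
    ∀ (r : ℝ), 0 < r →
    ∀ (E K : Set (GraphSpace d m)), IsCompact K → K ⊆ E →
      EMetric.diam K < ENNReal.ofReal r →
      (∀ x ∈ K, ∀ y ∈ E, y ∈ ball x r → ¬ InPerpCone θ x y) →
    ∀ (f : EuclideanSpace ℝ (Fin d) → EuclideanSpace ℝ (Fin m)),
      LipschitzWith (Real.toNNReal (1 / Real.cos θ)) f →
      (∀ x ∈ K, graphMap f (proj1 x) = x) →
    ∀ (x' : GraphSpace d m) (ρ : ℝ), K ⊆ ball x' ρ →
      (∀ x ∈ K, ball x' ρ ⊆ ball x r) →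
    ∀ (S : Set (EuclideanSpace ℝ (Fin d))), IsCube S →
      Disjoint S (proj1 '' K) →
      setEDist S (proj1 '' K) ≤ ENNReal.ofReal A * EMetric.diam S →
      EMetric.diam S ≤ ENNReal.ofReal A * setEDist S (proj1 '' K) →
      (whitneyPiece S (badPart θ r E K (ball x' ρ))).Nonempty →
      ENNReal.ofReal c * EMetric.diam S ≤
          setEDist (whitneyPiece S (badPart θ r E K (ball x' ρ))) K ∧
        setEDist (whitneyPiece S (badPart θ r E K (ball x' ρ))) K ≤
          ENNReal.ofReal C * EMetric.diam S := by
  obtain ⟨hθ0, hθπ⟩ := hθ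
  have hcos : 0 < Real.cos θ :=
    Real.cos_pos_of_mem_Ioo ⟨by linarith [Real.pi_pos], hθπ⟩
  have hA0 : 0 < A := lt_of_lt_of_le one_pos hA
  refine ⟨1 / A, (1 + A) / Real.cos θ, by positivity, by positivity, ?_⟩
  intro d m _hd _hm r _hr E K hK _hKE _hdiamK _hcone f _hf _hgraph x' ρ _hKball hballr
    S hS _hdisj hSd1 hSd2 hTne
  set PK := proj1 '' K with hPKdef
  set T := whitneyPiece S (badPart θ r E K (ball x' ρ)) with hTdef
  have hkey : ∀ y ∈ T, ∀ x ∈ K, Real.cos θ * dist y x ≤ dist (proj1 y) (proj1 x) := by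
    intro y hy x hx
    obtain ⟨⟨⟨_hyE, hyB⟩, hbad⟩, _hyS⟩ := hy
    have hnc : ¬ InPerpCone θ x y := fun h => hbad x hx ⟨hballr x hx hyB, h⟩
    rw [InPerpCone, not_lt, infDist_Vperp, proj1_sub] at hnc
    rwa [dist_eq_norm]
  have hlow : setEDist S PK ≤ setEDist T K := by
    refine le_iInf₂ fun y hy => ?_
    refine EMetric.le_infEdist.2 fun x hx => ?_
    calc setEDist S PK ≤ EMetric.infEdist (proj1 y) PK := iInf₂_le (proj1 y) hy.2
      _ ≤ edist (proj1 y) (proj1 x) := EMetric.infEdist_le_edist_of_mem ⟨x, hx, rfl⟩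
      _ ≤ edist y x := by
          rw [edist_dist, edist_dist]
          exact ENNReal.ofReal_le_ofReal (proj1_dist_le y x)
  constructor
  · calc ENNReal.ofReal (1 / A) * EMetric.diam S
        ≤ ENNReal.ofReal (1 / A) * (ENNReal.ofReal A * setEDist S PK) :=
          mul_le_mul_right hSd2 _
      _ = ENNReal.ofReal ((1 / A) * A) * setEDist S PK := by
          rw [← mul_assoc, ← ENNReal.ofReal_mul (by positivity)]
      _ = setEDist S PK := by
          rw [one_div, inv_mul_cancel₀ hA0.ne', ENNReal.ofReal_one, one_mul]
      _ ≤ setEDist T K := hlow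
  · obtain ⟨y₀, hy₀⟩ := hTne
    have hy₀S : proj1 y₀ ∈ S := hy₀.2
    have hSfin : EMetric.diam S ≠ ⊤ := cube_ediam_ne_top hS
    have hPne : PK.Nonempty := by
      by_contra hne
      rw [not_nonempty_iff_eq_empty] at hne
      have htop : setEDist S PK = ⊤ := by
        simp [setEDist, hne, EMetric.infEdist_empty]
        intro i _
        exact infEDist_empty
      rw [htop, top_le_iff] at hSd1
      exact (ENNReal.mul_ne_top ENNReal.ofReal_ne_top hSfin) hSd1
    have hproj_cont : Continuous (proj1 (d := d) (m := m)) := by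
      refine (LipschitzWith.of_dist_le_mul (K := 1) fun a b => ?_).continuous
      rw [NNReal.coe_one, one_mul]; exact proj1_dist_le a b
    obtain ⟨p, hpK, hpd⟩ := (hK.image hproj_cont).exists_infDist_eq_dist hPne (proj1 y₀)
    obtain ⟨x₀, hx₀, rfl⟩ := hpK
    have h1 : EMetric.infEdist (proj1 y₀) PK ≤ setEDist S PK + EMetric.diam S := by
      have hs : ∀ s ∈ S, EMetric.infEdist (proj1 y₀) PK
          ≤ EMetric.infEdist s PK + EMetric.diam S := fun s hs =>
        EMetric.infEdist_le_infEdist_add_edist.trans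
          (add_le_add_right (EMetric.edist_le_diam_of_mem hy₀S hs) _)
      calc EMetric.infEdist (proj1 y₀) PK
          ≤ ⨅ s ∈ S, (EMetric.infEdist s PK + EMetric.diam S) := le_iInf₂ hs
        _ = setEDist S PK + EMetric.diam S := by
            rw [setEDist, ENNReal.iInf_add]
            exact iInf_congr fun s => (ENNReal.iInf_add).symm
    have hx₀edist : edist (proj1 y₀) (proj1 x₀) ≤ setEDist S PK + EMetric.diam S := by
      rw [edist_dist, ← hpd, infDist, ENNReal.ofReal_toReal (infEdist_ne_top hPne)]
      exact h1
    have hyx : edist y₀ x₀ ≤ ENNReal.ofReal (1 / Real.cos θ)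
        * edist (proj1 y₀) (proj1 x₀) := by
      rw [edist_dist, edist_dist, ← ENNReal.ofReal_mul (by positivity)]
      refine ENNReal.ofReal_le_ofReal ?_
      have hk := hkey y₀ hy₀ x₀ hx₀
      calc dist y₀ x₀ = (1 / Real.cos θ) * (Real.cos θ * dist y₀ x₀) := by
            field_simp
        _ ≤ (1 / Real.cos θ) * dist (proj1 y₀) (proj1 x₀) :=
            mul_le_mul_of_nonneg_left hk (by positivity)
    calc setEDist T K ≤ EMetric.infEdist y₀ K := iInf₂_le y₀ hy₀
      _ ≤ edist y₀ x₀ := EMetric.infEdist_le_edist_of_mem hx₀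
      _ ≤ ENNReal.ofReal (1 / Real.cos θ) * (setEDist S PK + EMetric.diam S) :=
          hyx.trans (mul_le_mul_right hx₀edist _)
      _ ≤ ENNReal.ofReal (1 / Real.cos θ)
            * (ENNReal.ofReal A * EMetric.diam S + EMetric.diam S) :=
          mul_le_mul_right (add_le_add_left hSd1 _) _
      _ = ENNReal.ofReal ((1 + A) / Real.cos θ) * EMetric.diam S := by
          rw [show (1 + A) / Real.cos θ = (1 / Real.cos θ) * (1 + A) by ring,
            ENNReal.ofReal_mul (by positivity),
            ENNReal.ofReal_add zero_le_one hA0.le, ENNReal.ofReal_one]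
          ring
end
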